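/- arXiv:2112.04959 — 4 statements merged into one kernel-verified Lean document; each statement's English description precedes it below -/
import Mathlib

section
/- For every integer n and z, w on the unit circle, (Φⁿ(z) − Φⁿ(w)) ∧ (Φ⁻ⁿ(z) − Φ⁻ⁿ(w)) = 2i[(n+1)²|w^(n−1) − z^(n−1)|² − (n−1)²|w^(n+1) − z^(n+1)|²]. -/
open Complex

noncomputable def Phi (n : ℤ) (z : ℂ) : ℂ × ℂ :=
  (((n : ℂ) - 1) * z ^ (n + 1) * 1 + ((n : ℂ) + 1) * z ^ (n - 1) * 1,
   ((n : ℂ) - 1) * z ^ (n + 1) * (-I) + ((n : ℂ) + 1) * z ^ (n - 1) * I)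

def wedge (a b : ℂ × ℂ) : ℂ := a.1 * b.2 - a.2 * b.1

theorem stmt2 (n : ℤ) (z w : ℂ) (hz : ‖z‖ = 1) (hw : ‖w‖ = 1) :
    wedge (Phi n z - Phi n w) (Phi (-n) z - Phi (-n) w) =
      2 * I * (((n : ℂ) + 1) ^ 2 * ((‖w ^ (n - 1) - z ^ (n - 1)‖ : ℝ) : ℂ) ^ 2
        - ((n : ℂ) - 1) ^ 2 * ((‖w ^ (n + 1) - z ^ (n + 1)‖ : ℝ) : ℂ) ^ 2) := by
  have hz0 : z ≠ 0 := by intro h; simp [h] at hz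
  have hw0 : w ≠ 0 := by intro h; simp [h] at hw
  have conjp : ∀ (u : ℂ), ‖u‖ = 1 → ∀ m : ℤ,
      (starRingEnd ℂ) (u ^ m) = (u ^ m)⁻¹ := by
    intro u hu m
    rw [← Complex.norm_mul_exp_arg_mul_I u, hu]
    simp [← Complex.exp_conj, ← Complex.exp_int_mul, ← Complex.exp_neg]

  have habs : ∀ (x : ℂ), ((‖x‖ : ℂ)) ^ 2 = x * (starRingEnd ℂ) x := by
    intro x
    rw [Complex.mul_conj, Complex.normSq_eq_norm_sq]
    push_cast
    ring
  have e1 : (-n : ℤ) + 1 = -(n - 1) := by ring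
  have e2 : (-n : ℤ) - 1 = -(n + 1) := by ring
  have hza : z ^ (n + 1) ≠ 0 := zpow_ne_zero _ hz0
  have hzb : z ^ (n - 1) ≠ 0 := zpow_ne_zero _ hz0
  have hwa : w ^ (n + 1) ≠ 0 := zpow_ne_zero _ hw0
  have hwb : w ^ (n - 1) ≠ 0 := zpow_ne_zero _ hw0
  simp only [wedge, Phi, Prod.fst_sub, Prod.snd_sub, habs, map_sub,
    conjp z hz, conjp w hw, e1, e2, zpow_neg, Int.cast_neg]
  field_simp
  ring
end

section
/- Let n = 2m+1 with m ∈ ℤ, and let ν be a Borel probability measure on 𝕊¹ with Fourier coefficients cₖ = ∫ w^{−k} dν. Then (1/(8i))·[∫ Φⁿ∘σ dν] ∧ [∫ Φ⁻ⁿ∘σ dν] = m²|c_{m+1}|² − (m+1)²|c_m|², where Φⁿ(σ(w)) = 2[m w^{m+1}(1,−i) + (m+1)w^m(1,i)] and Φ⁻ⁿ = conj(Φⁿ). -/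
open Complex MeasureTheory

/-- `Φ^{2m+1}(σ(w)) = 2[m w^{m+1}(1,−i) + (m+1)w^m(1,i)]` as a pair in `ℂ²`. -/
noncomputable def PhiOddSigma (m : ℤ) (w : ℂ) : ℂ × ℂ :=
  (2 * ((m : ℂ) * w ^ (m + 1) * 1 + ((m : ℂ) + 1) * w ^ m * 1),
   2 * ((m : ℂ) * w ^ (m + 1) * (-I) + ((m : ℂ) + 1) * w ^ m * I))

/-- Componentwise complex conjugate, giving `Φ^{-(2m+1)}∘σ = conj (Φ^{2m+1}∘σ)`. -/
noncomputable def conjPair (a : ℂ × ℂ) : ℂ × ℂ :=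
  ((starRingEnd ℂ) a.1, (starRingEnd ℂ) a.2)

lemma measurable_zpow_c (k : ℤ) : Measurable (fun w : ℂ => w ^ k) := by
  cases k with
  | ofNat n => simpa using measurable_id.pow_const n
  | negSucc n =>
      simp only [zpow_negSucc]
      exact (measurable_id.pow_const (n + 1)).inv

lemma integrable_zpow_c (ν : Measure ℂ) [IsProbabilityMeasure ν]
    (hsupp : ∀ᵐ w ∂ν, ‖w‖ = 1) (k : ℤ) :
    Integrable (fun w : ℂ => w ^ k) ν := by
  refine ⟨(measurable_zpow_c k).aestronglyMeasurable,
    HasFiniteIntegral.of_bounded (C := 1) ?_⟩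
  filter_upwards [hsupp] with w hw
  simp [norm_zpow, hw]

lemma integrable_conj_c {ν : Measure ℂ} {f : ℂ → ℂ} (hf : Integrable f ν) :
    Integrable (fun w => (starRingEnd ℂ) (f w)) ν := by
  refine ⟨RCLike.continuous_conj.comp_aestronglyMeasurable hf.aestronglyMeasurable, ?_⟩
  simpa [MeasureTheory.HasFiniteIntegral] using hf.hasFiniteIntegral

theorem stmt15 (m : ℤ) (ν : Measure ℂ) [IsProbabilityMeasure ν]
    (hsupp : ∀ᵐ w ∂ν, ‖w‖ = 1)
    (c : ℤ → ℂ) (hc : ∀ k : ℤ, c k = ∫ w, w ^ (-k) ∂ν) :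
    (1 / (8 * I)) * wedge (∫ w, PhiOddSigma m w ∂ν) (∫ w, conjPair (PhiOddSigma m w) ∂ν)
      = ((m : ℂ) ^ 2 * (‖c (m + 1)‖ : ℂ) ^ 2
          - ((m : ℂ) + 1) ^ 2 * (‖c m‖ : ℂ) ^ 2) := by
  have hi : ∀ k : ℤ, Integrable (fun w : ℂ => w ^ k) ν := integrable_zpow_c ν hsupp
  set A := ∫ w, w ^ (m + 1) ∂ν with hA
  set B := ∫ w, w ^ m ∂ν with hB
  have hconj : ∀ k : ℤ, (starRingEnd ℂ) (∫ w, w ^ k ∂ν) = ∫ w, w ^ (-k) ∂ν := by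
    intro k
    rw [← integral_conj]
    refine integral_congr_ae ?_
    filter_upwards [hsupp] with w hw
    have hw0 : w ≠ 0 := by
      intro h; rw [h] at hw; simp at hw
    have hcw : (starRingEnd ℂ) w = w⁻¹ := by
      have hthis := Complex.mul_conj w
      have hns : Complex.normSq w = 1 := by
        rw [← Complex.sq_norm, hw]; norm_num
      field_simp [hw0]
      rw [mul_comm] at hthis
      rw [hthis, hns]; simp
    rw [map_zpow₀, hcw, inv_zpow, ← zpow_neg]
  have hcm1 : c (m + 1) = (starRingEnd ℂ) A := by rw [hc, hA, hconj]
  have hcm : c m = (starRingEnd ℂ) B := by rw [hc, hB, hconj]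
  -- rewrite components as linear combinations
  have ef1 : (fun w : ℂ => (PhiOddSigma m w).1)
      = fun w => (2 * (m : ℂ)) * w ^ (m + 1) + (2 * ((m : ℂ) + 1)) * w ^ m := by
    funext w; simp only [PhiOddSigma]; ring
  have ef2 : (fun w : ℂ => (PhiOddSigma m w).2)
      = fun w => (2 * (m : ℂ) * (-I)) * w ^ (m + 1) + (2 * ((m : ℂ) + 1) * I) * w ^ m := by
    funext w; simp only [PhiOddSigma]; ring
  have hi1 : Integrable (fun w => (PhiOddSigma m w).1) ν := by
    rw [ef1]; exact ((hi (m + 1)).const_mul _).add ((hi m).const_mul _)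
  have hi2 : Integrable (fun w => (PhiOddSigma m w).2) ν := by
    rw [ef2]; exact ((hi (m + 1)).const_mul _).add ((hi m).const_mul _)
  have h1 : ∫ w, (PhiOddSigma m w).1 ∂ν = 2 * ((m : ℂ) * A + ((m : ℂ) + 1) * B) := by
    rw [ef1, integral_add ((hi (m+1)).const_mul _) ((hi m).const_mul _),
      integral_const_mul, integral_const_mul]
    ring
  have h2 : ∫ w, (PhiOddSigma m w).2 ∂ν
      = 2 * ((m : ℂ) * A * (-I) + ((m : ℂ) + 1) * B * I) := by
    rw [ef2, integral_add ((hi (m+1)).const_mul _) ((hi m).const_mul _),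
      integral_const_mul, integral_const_mul]
    ring
  have hpair : ∫ w, PhiOddSigma m w ∂ν
      = (∫ w, (PhiOddSigma m w).1 ∂ν, ∫ w, (PhiOddSigma m w).2 ∂ν) := by
    rw [← integral_pair hi1 hi2]
  have hcpair : ∫ w, conjPair (PhiOddSigma m w) ∂ν
      = ((starRingEnd ℂ) (∫ w, (PhiOddSigma m w).1 ∂ν),
         (starRingEnd ℂ) (∫ w, (PhiOddSigma m w).2 ∂ν)) := by
    have heq : ∀ w, conjPair (PhiOddSigma m w)
        = ((starRingEnd ℂ) ((PhiOddSigma m w).1), (starRingEnd ℂ) ((PhiOddSigma m w).2)) := by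
      intro w; rfl
    simp only [heq]
    rw [integral_pair (integrable_conj_c hi1) (integrable_conj_c hi2),
      integral_conj, integral_conj]
  rw [hpair, hcpair, h1, h2]
  have sqabs : ∀ z : ℂ, ((‖z‖ : ℂ)) ^ 2 = z * (starRingEnd ℂ) z := by
    intro z
    rw [← Complex.ofReal_pow, Complex.sq_norm, Complex.mul_conj]
  rw [sqabs, sqabs, hcm1, hcm, Complex.conj_conj, Complex.conj_conj]
  simp only [wedge, map_mul, map_add, map_ofNat, Complex.conj_I, map_neg,
    map_intCast, map_one]
  have hI : I ≠ 0 := I_ne_zero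
  field_simp
  ring
end

section
/- Let u : Ω → ℂ be a C¹ map on an open set Ω ⊆ ℝ², nowhere vanishing, and let v = u². Write v = v₁ + i v₂ and define ρ₁ = (1/4)[(v₁/|v| + 1)(∂₁v₂ − ∂₂v₁) − (v₂/|v|)(∂₁v₁ + ∂₂v₂)] and ρ₂ = (1/4)[(v₂/|v|)(∂₁v₂ − ∂₂v₁) + (v₁/|v| − 1)(∂₁v₁ + ∂₂v₂)]. Then at every point, (ρ₁, ρ₂) = (curl u)·(u₁, u₂), where curl u = ∂₁u₂ − ∂₂u₁. -/
/-- Partial derivative in the first coordinate direction. -/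
noncomputable def pd1 (f : ℝ × ℝ → ℝ) (x : ℝ × ℝ) : ℝ := fderiv ℝ f x (1, 0)

/-- Partial derivative in the second coordinate direction. -/
noncomputable def pd2 (f : ℝ × ℝ → ℝ) (x : ℝ × ℝ) : ℝ := fderiv ℝ f x (0, 1)

theorem stmt17 (Ω : Set (ℝ × ℝ)) (hΩ : IsOpen Ω) (u₁ u₂ : ℝ × ℝ → ℝ)
    (hu : ContDiffOn ℝ 1 (fun x => (u₁ x, u₂ x)) Ω)
    (hne : ∀ x ∈ Ω, ¬(u₁ x = 0 ∧ u₂ x = 0))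
    (v₁ v₂ : ℝ × ℝ → ℝ)
    (hv₁ : v₁ = fun x => u₁ x ^ 2 - u₂ x ^ 2)
    (hv₂ : v₂ = fun x => 2 * u₁ x * u₂ x) :
    ∀ x ∈ Ω,
      ((1 / 4) * ((v₁ x / Real.sqrt (v₁ x ^ 2 + v₂ x ^ 2) + 1) * (pd1 v₂ x - pd2 v₁ x)
          - (v₂ x / Real.sqrt (v₁ x ^ 2 + v₂ x ^ 2)) * (pd1 v₁ x + pd2 v₂ x)),
       (1 / 4) * ((v₂ x / Real.sqrt (v₁ x ^ 2 + v₂ x ^ 2)) * (pd1 v₂ x - pd2 v₁ x)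
          + (v₁ x / Real.sqrt (v₁ x ^ 2 + v₂ x ^ 2) - 1) * (pd1 v₁ x + pd2 v₂ x)))
      = ((pd1 u₂ x - pd2 u₁ x) * u₁ x, (pd1 u₂ x - pd2 u₁ x) * u₂ x) := by
  intro x hx
  have hdp : DifferentiableAt ℝ (fun x => (u₁ x, u₂ x)) x :=
    (hu.contDiffAt (hΩ.mem_nhds hx)).differentiableAt one_ne_zero
  have h1 : HasFDerivAt u₁ (fderiv ℝ u₁ x) x := (hdp.fst).hasFDerivAt
  have h2 : HasFDerivAt u₂ (fderiv ℝ u₂ x) x := (hdp.snd).hasFDerivAt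
  have hw1 : HasFDerivAt v₁
      ((u₁ x • fderiv ℝ u₁ x + u₁ x • fderiv ℝ u₁ x)
        - (u₂ x • fderiv ℝ u₂ x + u₂ x • fderiv ℝ u₂ x)) x := by
    rw [hv₁]; simp only [pow_two]; exact (h1.mul h1).sub (h2.mul h2)
  have hw2 : HasFDerivAt v₂
      ((2 : ℝ) • ((u₁ x) • fderiv ℝ u₂ x + (u₂ x) • fderiv ℝ u₁ x)) x := by
    rw [hv₂]
    have := ((h1.mul h2).const_mul (2:ℝ))
    simpa [mul_assoc] using this
  have hr : Real.sqrt (v₁ x ^ 2 + v₂ x ^ 2) = u₁ x ^ 2 + u₂ x ^ 2 := by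
    rw [hv₁, hv₂]
    rw [show (u₁ x ^ 2 - u₂ x ^ 2) ^ 2 + (2 * u₁ x * u₂ x) ^ 2 = (u₁ x ^ 2 + u₂ x ^ 2) ^ 2 by ring]
    exact Real.sqrt_sq (by positivity)
  have hne' : u₁ x ≠ 0 ∨ u₂ x ≠ 0 := by
    have := hne x hx; tauto
  have hr0 : u₁ x ^ 2 + u₂ x ^ 2 ≠ 0 := by
    rcases hne' with h | h
    · positivity
    · positivity
  simp only [pd1, pd2, hw1.fderiv, hw2.fderiv, hr, Prod.mk.injEq,
    ContinuousLinearMap.sub_apply, ContinuousLinearMap.add_apply,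
    ContinuousLinearMap.smul_apply, smul_eq_mul, ContinuousLinearMap.coe_smul',
    Pi.smul_apply]
  simp only [hv₁, hv₂]
  constructor <;> (field_simp; ring)
end

section
/- Let B be the open unit disk in ℝ² and fix an angle β ∈ (0, π/2]. Suppose L₋ and L₊ are two line segments obtained as intersections with the disk of radius 2 of two lines making angles −β/2 and β/2 with a fixed direction, which intersect only outside the disk of radius 2. Then for any points x₋ ∈ L₋ ∩ B and x₊ ∈ L₊ ∩ B, |x₋ − x₊| ≥ 2 sin(β/2). -/
set_option maxHeartbeats 1000000


open Complex Real

private lemma span_aux (d1 d2 w : ℂ) :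
    ((w * (starRingEnd ℂ) d2).im : ℂ) * d1 - ((w * (starRingEnd ℂ) d1).im : ℂ) * d2
      = ((d1 * (starRingEnd ℂ) d2).im : ℂ) * w := by
  apply Complex.ext <;>
    simp only [Complex.mul_im, Complex.mul_re, Complex.sub_re, Complex.sub_im,
      Complex.ofReal_re, Complex.ofReal_im, Complex.conj_re, Complex.conj_im] <;> ring

/-- Two chords of the disk of radius 2, lying on lines making angles `±β/2` with a fixed
direction `e^{iα}`, whose underlying lines meet only outside the closed disk of radius 2:
any two points of the chords lying in the unit disk are at distance at least `2 sin(β/2)`. -/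
theorem stmt18 (β : ℝ) (hβ₀ : 0 < β) (hβ₁ : β ≤ π / 2) (α : ℝ) (pm pp : ℂ)
    (lineM lineP : Set ℂ)
    (hlineM : lineM = {z : ℂ | ∃ t : ℝ, z = pm + (t : ℂ) * Complex.exp ((α - β / 2 : ℝ) * I)})
    (hlineP : lineP = {z : ℂ | ∃ t : ℝ, z = pp + (t : ℂ) * Complex.exp ((α + β / 2 : ℝ) * I)})
    (hint : ∀ z ∈ lineM, z ∈ lineP → 2 < ‖z‖) :
    ∀ xm ∈ lineM, ∀ xp ∈ lineP, ‖xm‖ < 1 → ‖xp‖ < 1 →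
      2 * Real.sin (β / 2) ≤ ‖xm - xp‖ := by
  subst hlineM hlineP
  rintro xm ⟨u, rfl⟩ xp ⟨v, rfl⟩ hxm hxp
  obtain ⟨d1, hd1⟩ : ∃ d, d = Complex.exp (((α - β / 2 : ℝ) : ℂ) * I) := ⟨_, rfl⟩
  obtain ⟨d2, hd2⟩ : ∃ d, d = Complex.exp (((α + β / 2 : ℝ) : ℂ) * I) := ⟨_, rfl⟩
  rw [← hd1] at hxm ⊢
  rw [← hd2] at hxp ⊢
  have hS : (0:ℝ) < Real.sin β :=
    Real.sin_pos_of_pos_of_lt_pi hβ₀ (lt_of_le_of_lt hβ₁ (by linarith [Real.pi_pos]))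
  have hconj2 : (starRingEnd ℂ) d2 = Complex.exp (-(((α + β / 2 : ℝ) : ℂ)) * I) := by
    rw [hd2, ← Complex.exp_conj, map_mul, Complex.conj_ofReal, Complex.conj_I, mul_neg,
      ← neg_mul]
  have hd12 : d1 * (starRingEnd ℂ) d2 = Complex.exp (((-β : ℝ) : ℂ) * I) := by
    rw [hd1, hconj2, ← Complex.exp_add]
    congr 1
    push_cast
    ring
  have him12 : (d1 * (starRingEnd ℂ) d2).im = -Real.sin β := by
    rw [hd12, Complex.exp_ofReal_mul_I_im, Real.sin_neg]
  have hre12 : (d1 * (starRingEnd ℂ) d2).re = Real.cos β := by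
    rw [hd12, Complex.exp_ofReal_mul_I_re, Real.cos_neg]
  have hSne : ((-Real.sin β : ℝ) : ℂ) ≠ 0 := by
    rw [Complex.ofReal_ne_zero]
    exact neg_ne_zero.mpr (ne_of_gt hS)
  obtain ⟨t, s, hts⟩ : ∃ t s : ℝ, (t : ℂ) * d1 - (s : ℂ) * d2 = pp - pm := by
    refine ⟨((pp - pm) * (starRingEnd ℂ) d2).im / (-Real.sin β),
      ((pp - pm) * (starRingEnd ℂ) d1).im / (-Real.sin β), ?_⟩
    have h := span_aux d1 d2 (pp - pm)
    rw [him12] at h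
    rw [Complex.ofReal_div, Complex.ofReal_div, div_mul_eq_mul_div, div_mul_eq_mul_div,
      div_sub_div_same, h, mul_div_cancel_left₀ _ hSne]
  have hz0P : pm + (t : ℂ) * d1 = pp + (s : ℂ) * d2 := by linear_combination hts
  have hz0abs : 2 < ‖pm + (t : ℂ) * d1‖ := by
    refine hint _ ⟨t, by rw [hd1]⟩ ⟨s, by rw [hz0P, hd2]⟩
  have habs1 : ‖d1‖ = 1 := by rw [hd1]; exact Complex.norm_exp_ofReal_mul_I _
  have habs2 : ‖d2‖ = 1 := by rw [hd2]; exact Complex.norm_exp_ofReal_mul_I _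
  have hUgt : 1 < |u - t| := by
    have h1 : ‖(pm + (t:ℂ) * d1) - (pm + (u:ℂ) * d1)‖ = |u - t| := by
      rw [show (pm + (t:ℂ) * d1) - (pm + (u:ℂ) * d1) = ((t - u : ℝ) : ℂ) * d1 by
        push_cast; ring, norm_mul, habs1, Complex.norm_real, Real.norm_eq_abs, mul_one, abs_sub_comm]
    have h2 := norm_add_le ((pm + (t:ℂ) * d1) - (pm + (u:ℂ) * d1)) (pm + (u:ℂ) * d1)
    rw [sub_add_cancel, h1] at h2
    linarith
  have hVgt : 1 < |v - s| := by
    have h1 : ‖(pp + (s:ℂ) * d2) - (pp + (v:ℂ) * d2)‖ = |v - s| := by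
      rw [show (pp + (s:ℂ) * d2) - (pp + (v:ℂ) * d2) = ((s - v : ℝ) : ℂ) * d2 by
        push_cast; ring, norm_mul, habs2, Complex.norm_real, Real.norm_eq_abs, mul_one, abs_sub_comm]
    have h2 := norm_add_le ((pp + (s:ℂ) * d2) - (pp + (v:ℂ) * d2)) (pp + (v:ℂ) * d2)
    rw [sub_add_cancel, h1, ← hz0P] at h2
    linarith
  obtain ⟨U, hU⟩ : ∃ x : ℝ, x = u - t := ⟨_, rfl⟩
  obtain ⟨V, hV⟩ : ∃ x : ℝ, x = v - s := ⟨_, rfl⟩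
  rw [← hU] at hUgt
  rw [← hV] at hVgt
  have hdiff : (pm + (u:ℂ) * d1) - (pp + (v:ℂ) * d2) = (U : ℂ) * d1 - (V : ℂ) * d2 := by
    rw [hU, hV]
    push_cast
    linear_combination hts
  have hre1 : d1.re = Real.cos (α - β / 2) := by rw [hd1, Complex.exp_ofReal_mul_I_re]
  have him1 : d1.im = Real.sin (α - β / 2) := by rw [hd1, Complex.exp_ofReal_mul_I_im]
  have hre2 : d2.re = Real.cos (α + β / 2) := by rw [hd2, Complex.exp_ofReal_mul_I_re]
  have him2 : d2.im = Real.sin (α + β / 2) := by rw [hd2, Complex.exp_ofReal_mul_I_im]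
  have hcos : Real.cos (α - β / 2) * Real.cos (α + β / 2)
      + Real.sin (α - β / 2) * Real.sin (α + β / 2) = Real.cos β := by
    rw [← Real.cos_sub, show (α - β / 2) - (α + β / 2) = -β by ring, Real.cos_neg]
  have hsq : ‖(pm + (u:ℂ) * d1) - (pp + (v:ℂ) * d2)‖ ^ 2
      = U ^ 2 + V ^ 2 - 2 * U * V * Real.cos β := by
    rw [hdiff, Complex.sq_norm, Complex.normSq_apply]
    simp only [Complex.sub_re, Complex.sub_im, Complex.mul_re, Complex.mul_im,
      Complex.ofReal_re, Complex.ofReal_im, hre1, him1, hre2, him2]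
    have hs1 := Real.sin_sq_add_cos_sq (α - β / 2)
    have hs2 := Real.sin_sq_add_cos_sq (α + β / 2)
    linear_combination (U ^ 2) * hs1 + (V ^ 2) * hs2 - (2 * U * V) * hcos
  have hcosβ : 0 ≤ Real.cos β := Real.cos_nonneg_of_mem_Icc ⟨by linarith, hβ₁⟩
  have hcoshalf : Real.cos β = 1 - 2 * Real.sin (β / 2) ^ 2 := by
    have h1 := Real.cos_two_mul' (β / 2)
    have h2 := Real.sin_sq_add_cos_sq (β / 2)
    rw [show 2 * (β / 2) = β by ring] at h1
    linarith
  have hsinhalf : 0 ≤ Real.sin (β / 2) := by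
    apply Real.sin_nonneg_of_nonneg_of_le_pi <;> nlinarith [Real.pi_pos]
  have hU2 : 1 < U ^ 2 := by nlinarith [abs_nonneg U, _root_.sq_abs U]
  have hV2 : 1 < V ^ 2 := by nlinarith [abs_nonneg V, _root_.sq_abs V]
  have hmain : (2 * Real.sin (β / 2)) ^ 2
      ≤ ‖(pm + (u:ℂ) * d1) - (pp + (v:ℂ) * d2)‖ ^ 2 := by
    rw [hsq]
    rcases le_or_gt (U * V) 0 with hUV | hUV
    · nlinarith [mul_nonneg (neg_nonneg.2 hUV) hcosβ]
    · have hUV1 : 1 < U * V := by nlinarith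
      have hc1 : Real.cos β ≤ 1 := Real.cos_le_one β
      nlinarith [sq_nonneg (U - V),
        mul_nonneg (by linarith : (0:ℝ) ≤ U * V - 1) (by linarith : (0:ℝ) ≤ 1 - Real.cos β)]
  have h2s : 0 ≤ 2 * Real.sin (β / 2) := by linarith
  have hfin := Real.sqrt_le_sqrt hmain
  rwa [Real.sqrt_sq h2s, Real.sqrt_sq (norm_nonneg _)] at hfin
end
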